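/- Let 𝓢 ⊆ 2^[n] be a Sperner family and h : 𝓢 → 2^[n] a function such that h(S) ⊆ S for every S ∈ 𝓢. Then every set shattered by 𝓕(𝓢,h) lies in 𝓗(𝓢), i.e. Sh(𝓕(𝓢,h)) ⊆ 𝓗(𝓢). -/
import Mathlib


open Finset

/-- `𝓕` shatters `S` if every subset of `S` arises as `F ∩ S` for some `F ∈ 𝓕`. -/
def Shatters {n : ℕ} (𝓕 : Finset (Finset (Fin n))) (S : Finset (Fin n)) : Prop :=
  𝓕.image (· ∩ S) = S.powerset

/-- The family of all subsets of `[n]` shattered by `𝓕`. -/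
def ShFam {n : ℕ} (𝓕 : Finset (Finset (Fin n))) : Finset (Finset (Fin n)) :=
  Finset.univ.filter fun S => 𝓕.image (· ∩ S) = S.powerset

/-- A set system is shattering-extremal if it shatters exactly `|𝓕|` sets. -/
def SExtremal {n : ℕ} (𝓕 : Finset (Finset (Fin n))) : Prop :=
  (ShFam 𝓕).card = 𝓕.card

/-- A Sperner family: no member contains another member. -/
def IsSperner {n : ℕ} (𝓢 : Finset (Finset (Fin n))) : Prop :=
  ∀ S ∈ 𝓢, ∀ S' ∈ 𝓢, S ⊆ S' → S = S'

/-- `Q S H = {T ⊆ [n] : T ∩ S = H}`. -/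
def Q {n : ℕ} (S H : Finset (Fin n)) : Finset (Finset (Fin n)) :=
  Finset.univ.filter fun T => T ∩ S = H

/-- `𝓗(𝓢) = {T ⊆ [n] : no S ∈ 𝓢 satisfies S ⊆ T}`. -/
def HFam {n : ℕ} (𝓢 : Finset (Finset (Fin n))) : Finset (Finset (Fin n)) :=
  Finset.univ.filter fun T => ∀ S ∈ 𝓢, ¬ S ⊆ T

/-- `𝓕(𝓢,h) = 2^[n] \ ⋃_{S ∈ 𝓢} Q_{S,h(S)}`. -/
def FFam {n : ℕ} (𝓢 : Finset (Finset (Fin n))) (h : Finset (Fin n) → Finset (Fin n)) :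
    Finset (Finset (Fin n)) :=
  Finset.univ \ 𝓢.biUnion fun S => Q S (h S)


/-- Claim: every set shattered by `𝓕(𝓢,h)` lies in `𝓗(𝓢)`. -/
theorem stmt_1 {n : ℕ} (𝓢 : Finset (Finset (Fin n))) (h : Finset (Fin n) → Finset (Fin n))
    (hSperner : IsSperner 𝓢) (hsub : ∀ S ∈ 𝓢, h S ⊆ S) :
    ShFam (FFam 𝓢 h) ⊆ HFam 𝓢 := by
  intro T hT
  simp only [ShFam, mem_filter, mem_univ, true_and] at hT
  simp only [HFam, mem_filter, mem_univ, true_and]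
  intro S hS hST
  have hmem : h S ∈ T.powerset := by
    simp only [mem_powerset]
    exact (hsub S hS).trans hST
  rw [← hT] at hmem
  obtain ⟨F, hF, hFT⟩ := mem_image.mp hmem
  simp only [FFam, mem_sdiff, mem_biUnion, mem_univ, true_and, not_exists] at hF
  apply hF S ⟨hS, ?_⟩
  simp only [Q, mem_filter, mem_univ, true_and]
  have : F ∩ S = (F ∩ T) ∩ S := by
    rw [inter_assoc, inter_eq_right.mpr hST]
  rw [this, hFT, inter_eq_left.mpr (hsub S hS)]
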